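/- For every open set W ⋐ B with nonempty interior and compact closure in B, there exist M ∈ ℕ and a countable set Z ⊂ B such that the Möbius translates {η_ζ W : ζ ∈ Z} cover B with multiplicity at most M. -/

import Mathlib

open MeasureTheory Real Filter Set Metric
open scoped Topology ENNReal

noncomputable section

/-- The open unit disk in `ℂ`. -/
def unitDisk : Set ℂ := {z : ℂ | ‖z‖ < 1}

/-- The Möbius transformation `η_ζ(z) = (z - ζ)/(1 - conj(ζ)·z)`. -/
def eta (ζ z : ℂ) : ℂ := (z - ζ) / (1 - (starRingEnd ℂ) ζ * z)

/-- The inverse hyperbolic tangent. -/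
def artanh (x : ℝ) : ℝ := Real.log ((1 + x) / (1 - x)) / 2

/-- The hyperbolic (geodesic) distance of the Poincaré disk. -/
def hDist (z w : ℂ) : ℝ := 2 * _root_.artanh ‖eta w z‖

/-- The geodesic ball of radius `r` centered at `x` in the Poincaré disk. -/
def geoBall (x : ℂ) (r : ℝ) : Set ℂ := {z ∈ unitDisk | hDist x z < r}

/-- The closed geodesic ball of radius `r` centered at `x` in the Poincaré disk. -/
def geoClosedBall (x : ℂ) (r : ℝ) : Set ℂ := {z ∈ unitDisk | hDist x z ≤ r}

/-- The hyperbolic (Riemannian) measure `dμ = dx/(1-|x|²)²` of the Poincaré disk. -/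
def hyperMeasure : Measure ℂ :=
  (volume.restrict unitDisk).withDensity fun x => ENNReal.ofReal (((1 - ‖x‖ ^ 2) ^ 2)⁻¹)

/-! ### Algebraic lemmas -/

lemma norm_conj' (z : ℂ) : ‖(starRingEnd ℂ) z‖ = ‖z‖ := by
  exact RCLike.norm_conj z

lemma key_normSq (z w : ℂ) :
    ‖1 - (starRingEnd ℂ) w * z‖ ^ 2 - ‖z - w‖ ^ 2 = (1 - ‖w‖ ^ 2) * (1 - ‖z‖ ^ 2) := by
  have H : ((Complex.normSq (1 - (starRingEnd ℂ) w * z) : ℂ)) - Complex.normSq (z - w)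
      = (1 - Complex.normSq w) * (1 - Complex.normSq z) := by
    simp only [← Complex.mul_conj]
    simp only [map_sub, map_mul, map_one, Complex.conj_conj]
    ring
  have H' : (Complex.normSq (1 - (starRingEnd ℂ) w * z) : ℝ) - Complex.normSq (z - w)
      = (1 - Complex.normSq w) * (1 - Complex.normSq z) := by exact_mod_cast H
  simpa [Complex.sq_norm] using H'

lemma one_sub_ne {z w : ℂ} (hz : ‖z‖ < 1) (hw : ‖w‖ < 1) :
    1 - (starRingEnd ℂ) w * z ≠ 0 := by
  intro h
  have h1 : (starRingEnd ℂ) w * z = 1 := by linear_combination -h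
  have h2 : ‖(starRingEnd ℂ) w * z‖ < 1 := by
    rw [norm_mul, RCLike.norm_conj]
    nlinarith [norm_nonneg w, norm_nonneg z]
  rw [h1, norm_one] at h2; exact lt_irrefl _ h2

lemma denom_pos {z w : ℂ} (hz : ‖z‖ < 1) (hw : ‖w‖ < 1) :
    0 < ‖1 - (starRingEnd ℂ) w * z‖ :=
  norm_pos_iff.mpr (one_sub_ne hz hw)

lemma denom_le_two {z w : ℂ} (hz : ‖z‖ < 1) (hw : ‖w‖ < 1) :
    ‖1 - (starRingEnd ℂ) w * z‖ ≤ 2 := by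
  calc ‖1 - (starRingEnd ℂ) w * z‖ ≤ ‖(1:ℂ)‖ + ‖(starRingEnd ℂ) w * z‖ := norm_sub_le _ _
  _ ≤ 2 := by
      rw [norm_one, norm_mul, RCLike.norm_conj]
      nlinarith [norm_nonneg w, norm_nonneg z]

lemma eta_norm_lt_one {ζ z : ℂ} (hζ : ‖ζ‖ < 1) (hz : ‖z‖ < 1) : ‖eta ζ z‖ < 1 := by
  rw [eta, norm_div]
  rw [div_lt_one (denom_pos hz hζ)]
  have ha : (0:ℝ) < 1 - ‖ζ‖ ^ 2 := by nlinarith [norm_nonneg ζ]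
  have hb : (0:ℝ) < 1 - ‖z‖ ^ 2 := by nlinarith [norm_nonneg z]
  have h2 : (0:ℝ) < (1 - ‖ζ‖ ^ 2) * (1 - ‖z‖ ^ 2) := mul_pos ha hb
  nlinarith [key_normSq z ζ, norm_nonneg (z - ζ), norm_nonneg (1 - (starRingEnd ℂ) ζ * z)]

lemma eta_comp {ζ z w : ℂ} (hζ : ‖ζ‖ < 1) (hz : ‖z‖ < 1) (hw : ‖w‖ < 1) :
    eta (eta ζ w) (eta ζ z)
      = (z - w) * (1 - ζ * (starRingEnd ℂ) w) /
        ((1 - (starRingEnd ℂ) ζ * w) * (1 - (starRingEnd ℂ) w * z)) := by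
  have d1 : 1 - (starRingEnd ℂ) ζ * z ≠ 0 := one_sub_ne hz hζ
  have d2 : 1 - (starRingEnd ℂ) ζ * w ≠ 0 := one_sub_ne hw hζ
  have d3 : 1 - ζ * (starRingEnd ℂ) w ≠ 0 := by
    intro h
    apply one_sub_ne hζ hw
    rw [← h]; ring
  have d4 : 1 - (starRingEnd ℂ) w * z ≠ 0 := one_sub_ne hz hw
  have d5 : (1 : ℂ) - ζ * (starRingEnd ℂ) ζ ≠ 0 := by
    intro h
    apply one_sub_ne hζ hζ
    rw [← h]; ring
  have hden : 1 - (starRingEnd ℂ) (eta ζ w) * eta ζ z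
      = (1 - ζ * (starRingEnd ℂ) ζ) * (1 - (starRingEnd ℂ) w * z) /
        ((1 - ζ * (starRingEnd ℂ) w) * (1 - (starRingEnd ℂ) ζ * z)) := by
    have d3' : 1 - (starRingEnd ℂ) w * ζ ≠ 0 := by rw [mul_comm]; exact d3
    rw [eta, eta]
    simp only [map_div₀, map_sub, map_mul, map_one, Complex.conj_conj]
    field_simp
    ring
  have hnum : eta ζ z - eta ζ w
      = (1 - ζ * (starRingEnd ℂ) ζ) * (z - w) /
        ((1 - (starRingEnd ℂ) ζ * z) * (1 - (starRingEnd ℂ) ζ * w)) := by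
    have d1' : 1 - z * (starRingEnd ℂ) ζ ≠ 0 := by rw [mul_comm]; exact d1
    have d2' : 1 - w * (starRingEnd ℂ) ζ ≠ 0 := by rw [mul_comm]; exact d2
    rw [eta, eta]; field_simp; ring
  rw [show eta (eta ζ w) (eta ζ z)
      = (eta ζ z - eta ζ w) / (1 - (starRingEnd ℂ) (eta ζ w) * eta ζ z) from rfl, hnum, hden]
  field_simp

lemma norm_eta_comp {ζ z w : ℂ} (hζ : ‖ζ‖ < 1) (hz : ‖z‖ < 1) (hw : ‖w‖ < 1) :
    ‖eta (eta ζ w) (eta ζ z)‖ = ‖eta w z‖ := by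
  rw [eta_comp hζ hz hw, eta]
  have hc : ‖1 - ζ * (starRingEnd ℂ) w‖ = ‖1 - (starRingEnd ℂ) ζ * w‖ := by
    rw [show (1 : ℂ) - ζ * (starRingEnd ℂ) w = (starRingEnd ℂ) (1 - (starRingEnd ℂ) ζ * w) by
      simp only [map_sub, map_mul, map_one, Complex.conj_conj]]
    exact norm_conj' _
  rw [norm_div, norm_div, norm_mul, norm_mul, hc,
    mul_comm ‖z - w‖ ‖1 - (starRingEnd ℂ) ζ * w‖,
    mul_div_mul_left _ _ (denom_pos hw hζ).ne']

lemma eta_zero (ζ : ℂ) : eta ζ 0 = -ζ := by simp [eta]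

lemma eta_self (z : ℂ) : eta z z = 0 := by simp [eta]

lemma eta_inv {ζ z : ℂ} (hζ : ‖ζ‖ < 1) (hz : ‖z‖ < 1) : eta (-ζ) (eta ζ z) = z := by
  have h := eta_comp hζ hz (show ‖(0:ℂ)‖ < 1 by norm_num)
  rw [eta_zero] at h
  simpa using h

lemma eta_inv' {ζ z : ℂ} (hζ : ‖ζ‖ < 1) (hz : ‖z‖ < 1) : eta ζ (eta (-ζ) z) = z := by
  have h := eta_inv (show ‖-ζ‖ < 1 by rwa [norm_neg]) hz
  rwa [neg_neg] at h

lemma hDist_invariant {ζ a b : ℂ} (hζ : ‖ζ‖ < 1) (ha : ‖a‖ < 1) (hb : ‖b‖ < 1) :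
    hDist (eta ζ a) (eta ζ b) = hDist a b := by
  rw [hDist, hDist, norm_eta_comp hζ ha hb]

lemma hDist_symm (a b : ℂ) : hDist a b = hDist b a := by
  have h2 : (1 : ℂ) - (starRingEnd ℂ) a * b = (starRingEnd ℂ) (1 - (starRingEnd ℂ) b * a) := by
    simp only [map_sub, map_mul, map_one, Complex.conj_conj]; ring
  have h : ‖eta b a‖ = ‖eta a b‖ := by
    rw [eta, eta, norm_div, norm_div, norm_sub_rev, h2, norm_conj']
  rw [hDist, hDist, h]

lemma hDist_self (a : ℂ) : hDist a a = 0 := by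
  rw [hDist, eta_self]
  simp [_root_.artanh]

/-! ### _root_.artanh lemmas -/

lemma artanh_nonneg {a : ℝ} (h0 : 0 ≤ a) (h1 : a < 1) : 0 ≤ _root_.artanh a := by
  rw [_root_.artanh]
  have : (1:ℝ) ≤ (1 + a) / (1 - a) := by
    rw [le_div_iff₀ (by linarith)]; linarith
  have := Real.log_nonneg this
  linarith

lemma le_two_artanh {a : ℝ} (h0 : 0 ≤ a) (h1 : a < 1) : a ≤ 2 * _root_.artanh a := by
  rw [_root_.artanh]
  have hpos : (0:ℝ) < 1 - a := by linarith
  have h2 : (1:ℝ) / (1 - a) ≤ (1 + a) / (1 - a) := by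
    rw [div_le_div_iff₀ (by linarith : (0:ℝ) < 1 - a) (by linarith : (0:ℝ) < 1 - a)]
    nlinarith
  have h3 : Real.log ((1 + a) / (1 - a)) ≥ Real.log (1 / (1 - a)) :=
    Real.log_le_log (by rw [one_div]; positivity) h2
  have h4 : Real.log (1 / (1 - a)) = - Real.log (1 - a) := by
    rw [one_div, Real.log_inv]
  have h5 : Real.log (1 - a) ≤ -a := by
    have := Real.log_le_sub_one_of_pos hpos
    linarith
  linarith

lemma two_artanh_le {a : ℝ} (h0 : 0 ≤ a) (h1 : a ≤ 1/2) : 2 * _root_.artanh a ≤ 4 * a := by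
  rw [_root_.artanh]
  have hpos : (0:ℝ) < 1 - a := by linarith
  have h2 : (1 + a) / (1 - a) ≤ 1 + 4 * a := by
    rw [div_le_iff₀ hpos]; nlinarith
  have h3 : Real.log ((1 + a) / (1 - a)) ≤ Real.log (1 + 4 * a) :=
    Real.log_le_log (by positivity) h2
  have h4 : Real.log (1 + 4 * a) ≤ 4 * a := by
    have := Real.log_le_sub_one_of_pos (show (0:ℝ) < 1 + 4*a by linarith)
    linarith
  linarith

lemma artanh_mono {a b : ℝ} (h0 : 0 ≤ a) (hab : a ≤ b) (hb : b < 1) :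
    _root_.artanh a ≤ _root_.artanh b := by
  rw [_root_.artanh, _root_.artanh]
  have ha1 : a < 1 := lt_of_le_of_lt hab hb
  have h2 : (1 + a) / (1 - a) ≤ (1 + b) / (1 - b) := by
    rw [div_le_div_iff₀ (by linarith) (by linarith)]; nlinarith
  have := Real.log_le_log (div_pos (by linarith) (by linarith)) h2
  linarith

lemma artanh_escape {a R : ℝ} (h0 : 0 ≤ a) (h1 : a < 1) (h : 2 * _root_.artanh a < R) :
    a < 1 - Real.exp (-R) := by
  rw [_root_.artanh] at h
  have hpos : (0:ℝ) < 1 - a := by linarith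
  have h2 : Real.log ((1 + a) / (1 - a)) < R := by linarith
  have h3 : (1 + a) / (1 - a) < Real.exp R := by
    calc (1 + a) / (1 - a) = Real.exp (Real.log ((1 + a) / (1 - a))) :=
      (Real.exp_log (by positivity)).symm
    _ < Real.exp R := Real.exp_lt_exp.mpr h2
  have h4 : (1:ℝ) / (1 - a) ≤ (1 + a) / (1 - a) := by
    rw [div_le_div_iff₀ (by linarith : (0:ℝ) < 1 - a) (by linarith : (0:ℝ) < 1 - a)]
    nlinarith
  have h5 : (1:ℝ) / (1 - a) < Real.exp R := lt_of_le_of_lt h4 h3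
  have h5' : 1 < Real.exp R * (1 - a) := by
    rw [div_lt_iff₀ hpos] at h5; linarith
  have h6 : Real.exp (-R) < 1 - a := by
    rw [Real.exp_neg, inv_eq_one_div, div_lt_iff₀ (Real.exp_pos R)]
    linarith
  linarith

/-! ### the translation center -/

def zeta (u c : ℂ) : ℂ :=
  (u * (1 - (Complex.normSq c : ℂ)) - c * (1 - (Complex.normSq u : ℂ))) /
    (1 - (Complex.normSq c : ℂ) * (Complex.normSq u : ℂ))

lemma zeta_norm_lt_one {u c : ℂ} (hu : ‖u‖ < 1) (hc : ‖c‖ < 1) : ‖zeta u c‖ < 1 := by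
  have hnu : Complex.normSq u = ‖u‖ ^ 2 := by
    rw [Complex.normSq_eq_norm_sq]
  have hnc : Complex.normSq c = ‖c‖ ^ 2 := by
    rw [Complex.normSq_eq_norm_sq]
  have hu0 := norm_nonneg u
  have hc0 := norm_nonneg c
  have hcu : ‖c‖ * ‖u‖ < 1 := by nlinarith
  have hD : (0:ℝ) < 1 - ‖c‖^2 * ‖u‖^2 := by nlinarith [mul_nonneg hc0 hu0]
  rw [zeta, norm_div]
  have hden : ‖(1 : ℂ) - (Complex.normSq c : ℂ) * (Complex.normSq u : ℂ)‖
      = 1 - ‖c‖^2 * ‖u‖^2 := by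
    rw [show (1 : ℂ) - (Complex.normSq c : ℂ) * (Complex.normSq u : ℂ)
        = ((1 - ‖c‖^2 * ‖u‖^2 : ℝ) : ℂ) by push_cast [hnu, hnc]; ring]
    rw [Complex.norm_real, Real.norm_eq_abs, abs_of_pos hD]
  rw [hden, div_lt_one hD]
  calc ‖u * (1 - (Complex.normSq c : ℂ)) - c * (1 - (Complex.normSq u : ℂ))‖
      ≤ ‖u * (1 - (Complex.normSq c : ℂ))‖ + ‖c * (1 - (Complex.normSq u : ℂ))‖ :=
        norm_sub_le _ _
    _ = ‖u‖ * (1 - ‖c‖^2) + ‖c‖ * (1 - ‖u‖^2) := by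
        rw [norm_mul, norm_mul]
        rw [show (1 : ℂ) - (Complex.normSq c : ℂ) = ((1 - ‖c‖^2 : ℝ) : ℂ) by
          push_cast [hnc]; ring]
        rw [show (1 : ℂ) - (Complex.normSq u : ℂ) = ((1 - ‖u‖^2 : ℝ) : ℂ) by
          push_cast [hnu]; ring]
        rw [Complex.norm_real, Complex.norm_real, Real.norm_eq_abs, Real.norm_eq_abs,
          abs_of_pos (by nlinarith : (0:ℝ) < 1 - ‖c‖^2),
          abs_of_pos (by nlinarith : (0:ℝ) < 1 - ‖u‖^2)]
    _ < 1 - ‖c‖^2 * ‖u‖^2 := by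
        nlinarith [mul_pos (mul_pos (show (0:ℝ) < 1 - ‖c‖*‖u‖ by linarith)
          (show (0:ℝ) < 1 - ‖u‖ by linarith)) (show (0:ℝ) < 1 - ‖c‖ by linarith)]

lemma eta_zeta {u c : ℂ} (hu : ‖u‖ < 1) (hc : ‖c‖ < 1) : eta (zeta u c) u = c := by
  have d0 : (1 : ℂ) - (Complex.normSq c : ℂ) * (Complex.normSq u : ℂ) ≠ 0 := by
    have hD : (0:ℝ) < 1 - Complex.normSq c * Complex.normSq u := by
      have hnu : Complex.normSq u = ‖u‖ ^ 2 := by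
        rw [Complex.normSq_eq_norm_sq]
      have hnc : Complex.normSq c = ‖c‖ ^ 2 := by
        rw [Complex.normSq_eq_norm_sq]
      rw [hnu, hnc]
      have hcu : ‖c‖ * ‖u‖ < 1 := by nlinarith [norm_nonneg u, norm_nonneg c]
      nlinarith [mul_nonneg (norm_nonneg c) (norm_nonneg u)]
    intro h
    have : ((1 - Complex.normSq c * Complex.normSq u : ℝ) : ℂ) = 0 := by push_cast; linear_combination h
    rw [Complex.ofReal_eq_zero] at this
    linarith
  have dnu : (1 : ℂ) - (Complex.normSq u : ℂ) ≠ 0 := by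
    intro h
    have h2 : ((1 - Complex.normSq u : ℝ) : ℂ) = 0 := by push_cast; linear_combination h
    rw [Complex.ofReal_eq_zero] at h2
    have hnu : Complex.normSq u = ‖u‖ ^ 2 := by
      rw [Complex.normSq_eq_norm_sq]
    rw [hnu] at h2
    nlinarith [norm_nonneg u]
  have dcu : (1 : ℂ) + (starRingEnd ℂ) c * u ≠ 0 := by
    intro h
    have h2 : (starRingEnd ℂ) c * u = -1 := by linear_combination h
    have h3 : ‖(starRingEnd ℂ) c * u‖ < 1 := by
      rw [norm_mul, norm_conj']
      nlinarith [norm_nonneg c, norm_nonneg u]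
    rw [h2, norm_neg, norm_one] at h3
    exact lt_irrefl _ h3
  have hconj : (starRingEnd ℂ) (zeta u c)
      = ((starRingEnd ℂ) u * (1 - (Complex.normSq c : ℂ))
          - (starRingEnd ℂ) c * (1 - (Complex.normSq u : ℂ))) /
        (1 - (Complex.normSq c : ℂ) * (Complex.normSq u : ℂ)) := by
    rw [zeta]
    simp only [map_div₀, map_sub, map_mul, map_one, Complex.conj_conj, Complex.conj_ofReal]
  have hζ1 : ‖zeta u c‖ < 1 := zeta_norm_lt_one hu hc
  have hne : 1 - (starRingEnd ℂ) (zeta u c) * u ≠ 0 := one_sub_ne hu hζ1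
  set N : ℂ := u * (1 - (Complex.normSq c : ℂ)) - c * (1 - (Complex.normSq u : ℂ)) with hN
  set D : ℂ := 1 - (Complex.normSq c : ℂ) * (Complex.normSq u : ℂ) with hD
  have e1 : u - zeta u c = (u * D - N) / D := by
    rw [zeta, ← hN, ← hD]
    field_simp
  have e2 : 1 - (starRingEnd ℂ) (zeta u c) * u = (D - (starRingEnd ℂ) N * u) / D := by
    have hcN : (starRingEnd ℂ) N = (starRingEnd ℂ) u * (1 - (Complex.normSq c : ℂ))
        - (starRingEnd ℂ) c * (1 - (Complex.normSq u : ℂ)) := by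
      rw [hN]; simp only [map_sub, map_mul, map_one, Complex.conj_ofReal]
    rw [hconj, hcN]
    field_simp
  have hne2 : D - (starRingEnd ℂ) N * u ≠ 0 := by
    intro h
    apply hne
    rw [e2, h, zero_div]
  have e3 : (u * D - N) / D / ((D - (starRingEnd ℂ) N * u) / D)
      = (u * D - N) / (D - (starRingEnd ℂ) N * u) := by
    rw [div_div_div_comm, div_self d0, div_one]
  rw [eta, e1, e2, e3, div_eq_iff hne2, hN, hD]
  simp only [map_sub, map_mul, map_one, Complex.conj_conj, Complex.conj_ofReal]
  simp only [← Complex.mul_conj]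
  ring

/-! ### Packing lemma -/

lemma hDist_lt_of_close {a b : ℂ} {t : ℝ} (ht : t < 1) (ha : ‖a‖ ≤ t) (hb : ‖b‖ ≤ t)
    {r : ℝ} (hr : 0 < r)
    (hclose : ‖a - b‖ < min ((1 - t^2)/2) (r * (1 - t^2) / 4)) : hDist a b < r := by
  have ht0 : 0 ≤ t := le_trans (norm_nonneg a) ha
  have ht2 : (0:ℝ) < 1 - t^2 := by nlinarith
  have hden : 1 - t^2 ≤ ‖1 - (starRingEnd ℂ) b * a‖ := by
    have h1 : ‖(starRingEnd ℂ) b * a‖ ≤ t^2 := by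
      rw [norm_mul, norm_conj']
      nlinarith [norm_nonneg a, norm_nonneg b]
    calc 1 - t^2 ≤ ‖(1:ℂ)‖ - ‖(starRingEnd ℂ) b * a‖ := by rw [norm_one]; linarith
    _ ≤ ‖1 - (starRingEnd ℂ) b * a‖ := norm_sub_norm_le _ _
  have hρ : ‖eta b a‖ ≤ ‖a - b‖ / (1 - t^2) := by
    rw [eta, norm_div]
    exact div_le_div_of_nonneg_left (norm_nonneg _) ht2 hden
  have hρhalf : ‖eta b a‖ ≤ 1/2 := by
    have : ‖a - b‖ / (1 - t^2) < 1/2 := by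
      rw [div_lt_iff₀ ht2]
      have := lt_of_lt_of_le hclose (min_le_left _ _)
      linarith
    linarith
  have hρr : ‖eta b a‖ < r / 4 := by
    have : ‖a - b‖ / (1 - t^2) < r / 4 := by
      rw [div_lt_iff₀ ht2]
      have := lt_of_lt_of_le hclose (min_le_right _ _)
      linarith
    linarith
  rw [hDist]
  calc 2 * _root_.artanh ‖eta b a‖ ≤ 4 * ‖eta b a‖ :=
    two_artanh_le (norm_nonneg _) hρhalf
  _ < 4 * (r/4) := by
      apply mul_lt_mul_of_pos_left hρr; norm_num
  _ = r := by ring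

lemma pack (r t : ℝ) (hr : 0 < r) (ht : t < 1) :
    ∃ M : ℕ, ∀ T : Set ℂ, (∀ u ∈ T, ‖u‖ ≤ t) →
      (∀ a ∈ T, ∀ b ∈ T, a ≠ b → r ≤ hDist a b) → T.Finite ∧ T.ncard ≤ M := by
  rcases le_or_gt t 0 with ht0 | ht0
  · -- T is a subsingleton (at most {0}), M = 1
    refine ⟨1, fun T hTt _ => ?_⟩
    have hsub : T.Subsingleton := by
      intro a ha b hb
      have h1 : ‖a‖ = 0 := le_antisymm (le_trans (hTt a ha) ht0) (norm_nonneg a)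
      have h2 : ‖b‖ = 0 := le_antisymm (le_trans (hTt b hb) ht0) (norm_nonneg b)
      rw [norm_eq_zero] at h1 h2
      rw [h1, h2]
    refine ⟨hsub.finite, ?_⟩
    rcases hsub.eq_empty_or_singleton with h | ⟨a, h⟩
    · rw [h]; simp
    · rw [h]; simp
  · set δ : ℝ := min ((1 - t^2)/2) (r * (1 - t^2) / 4) with hδ
    have ht2 : (0:ℝ) < 1 - t^2 := by nlinarith
    have hδpos : 0 < δ := by
      apply lt_min
      · linarith
      · positivity
    obtain ⟨F, hF⟩ := (isCompact_closedBall (0:ℂ) 1).elim_finite_subcover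
      (fun y : ℂ => Metric.ball y (δ/2)) (fun y => Metric.isOpen_ball)
      (fun x _ => Set.mem_iUnion.mpr ⟨x, Metric.mem_ball_self (by positivity)⟩)
    refine ⟨F.card, fun T hTt hsep => ?_⟩
    have hchoice : ∀ u ∈ T, ∃ i ∈ F, u ∈ Metric.ball i (δ/2) := by
      intro u hu
      have : u ∈ Metric.closedBall (0:ℂ) 1 := by
        rw [mem_closedBall_zero_iff]
        exact le_trans (hTt u hu) (le_of_lt ht)
      have := hF this
      rw [Set.mem_iUnion] at this
      obtain ⟨i, hi⟩ := this
      rw [Set.mem_iUnion] at hi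
      obtain ⟨hiF, hui⟩ := hi
      exact ⟨i, hiF, hui⟩
    classical
    choose! g hgF hgball using hchoice
    have hinj : Set.InjOn g T := by
      intro a ha b hb hab
      by_contra hne
      have hra := hgball a ha
      have hrb := hgball b hb
      rw [hab] at hra
      have hd : dist a b < δ := by
        calc dist a b ≤ dist a (g b) + dist (g b) b := dist_triangle _ _ _
        _ < δ/2 + δ/2 := by
            rw [Metric.mem_ball] at hra hrb
            rw [dist_comm (g b) b]
            linarith
        _ = δ := by ring
      have hlt : hDist a b < r := by
        apply hDist_lt_of_close ht (hTt a ha) (hTt b hb) hr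
        rw [← hδ]
        rwa [Complex.dist_eq] at hd
      exact absurd (hsep a ha b hb hne) (not_le.mpr hlt)
    have himfin : (g '' T).Finite := by
      apply Set.Finite.subset F.finite_toSet
      rintro _ ⟨u, hu, rfl⟩
      exact hgF u hu
    have hTfin : T.Finite := Set.Finite.of_finite_image himfin hinj
    refine ⟨hTfin, ?_⟩
    calc T.ncard = (g '' T).ncard := (Set.ncard_image_of_injOn hinj).symm
    _ ≤ (F : Set ℂ).ncard := Set.ncard_le_ncard (by
        rintro _ ⟨u, hu, rfl⟩
        exact hgF u hu) F.finite_toSet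
    _ = F.card := by rw [Set.ncard_coe_finset]

lemma mem_unitDisk {z : ℂ} : z ∈ unitDisk ↔ ‖z‖ < 1 := Iff.rfl


/-- Uniformly-locally-finite covering of the Poincaré disk by Möbius translates of a
fixed nonempty relatively compact open set `W ⋐ B`. -/
theorem mobius_covering (W : Set ℂ) (hWopen : IsOpen W) (hWne : W.Nonempty)
    (hWsub : closure W ⊆ unitDisk) (hWcpt : IsCompact (closure W)) :
    ∃ (M : ℕ) (Z : Set ℂ), Z.Countable ∧ Z ⊆ unitDisk ∧
      (∀ x ∈ unitDisk, ∃ ζ ∈ Z, x ∈ eta ζ '' W) ∧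
      (∀ x ∈ unitDisk, {ζ ∈ Z | x ∈ eta ζ '' W}.Finite ∧
        {ζ ∈ Z | x ∈ eta ζ '' W}.ncard ≤ M) := by
  classical
  obtain ⟨w₀, hw₀W⟩ := hWne
  have hWd : ∀ w ∈ W, ‖w‖ < 1 := fun w hw => hWsub (subset_closure hw)
  have hw₀ : ‖w₀‖ < 1 := hWd w₀ hw₀W
  -- Euclidean ball inside W
  obtain ⟨ε, hε, hball⟩ := Metric.isOpen_iff.mp hWopen w₀ hw₀W
  set r : ℝ := ε / 8 with hr_def
  have hr : 0 < r := by positivity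
  -- bound the size of W
  obtain ⟨wm, hwm, hmax⟩ := hWcpt.exists_isMaxOn ⟨w₀, subset_closure hw₀W⟩
    continuous_norm.continuousOn
  set t₀ : ℝ := ‖wm‖ with ht₀_def
  have ht₀ : t₀ < 1 := hWsub hwm
  have ht₀0 : 0 ≤ t₀ := norm_nonneg _
  have hWt₀ : ∀ w ∈ W, ‖w‖ ≤ t₀ := fun w hw => hmax (subset_closure hw)
  set c₀ : ℝ := (1 - ‖w₀‖^2) * (1 - t₀^2) with hc₀_def
  have hc₀pos : 0 < c₀ := by
    apply mul_pos
    · nlinarith [norm_nonneg w₀]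
    · nlinarith
  have hc₀le : c₀ ≤ 1 := by
    have h1 : 1 - ‖w₀‖^2 ≤ 1 := by nlinarith [norm_nonneg w₀]
    have h2 : 1 - t₀^2 ≤ 1 := by nlinarith
    have hb : (0:ℝ) ≤ 1 - t₀^2 := by nlinarith
    rw [hc₀_def]
    exact mul_le_one₀ h1 hb h2
  set q : ℝ := Real.sqrt (1 - c₀/4) with hq_def
  have hargpos : 0 ≤ 1 - c₀/4 := by linarith
  have hq0 : 0 ≤ q := Real.sqrt_nonneg _
  have hq1 : q < 1 := by
    have h := Real.sqrt_lt_sqrt hargpos (show 1 - c₀/4 < 1 by linarith)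
    rwa [Real.sqrt_one, ← hq_def] at h
  have hqsq : q^2 = 1 - c₀/4 := Real.sq_sqrt hargpos
  -- hDist bound on W
  have hWbound : ∀ w ∈ W, hDist w₀ w ≤ 2 * _root_.artanh q := by
    intro w hw
    have hw1 : ‖w‖ < 1 := hWd w hw
    have hwt : ‖w‖ ≤ t₀ := hWt₀ w hw
    have hDpos := denom_pos hw₀ hw1
    have hDle := denom_le_two hw₀ hw1
    have hkey := key_normSq w₀ w
    have hρ : ‖eta w w₀‖ ≤ q := by
      rw [hq_def, Real.le_sqrt (norm_nonneg _) hargpos]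
      rw [eta, norm_div, div_pow, div_le_iff₀ (by positivity)]
      have hc : c₀ ≤ (1 - ‖w‖^2) * (1 - ‖w₀‖^2) := by
        have h6 : 1 - t₀^2 ≤ 1 - ‖w‖^2 := by nlinarith [norm_nonneg w]
        have h5 : (0:ℝ) ≤ 1 - ‖w₀‖^2 := by nlinarith [norm_nonneg w₀]
        rw [hc₀_def, mul_comm]
        exact mul_le_mul_of_nonneg_right h6 h5
      have hD4 : ‖1 - (starRingEnd ℂ) w * w₀‖^2 ≤ 4 := by nlinarith
      have hprod : c₀ * ‖1 - (starRingEnd ℂ) w * w₀‖^2 ≤ c₀ * 4 :=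
        mul_le_mul_of_nonneg_left hD4 hc₀pos.le
      nlinarith
    rw [hDist]
    have := artanh_mono (norm_nonneg (eta w w₀)) hρ hq1
    linarith
  set R : ℝ := 2 * _root_.artanh q + 1 with hR_def
  have hRpos : 0 < R := by
    have := artanh_nonneg hq0 hq1
    linarith
  have hWR : ∀ w ∈ W, hDist w₀ w < R := fun w hw => by
    have := hWbound w hw; linarith
  set t' : ℝ := 1 - Real.exp (-R) with ht'_def
  have ht'1 : t' < 1 := by
    have := Real.exp_pos (-R); linarith
  -- the packing constant
  obtain ⟨M, hM⟩ := pack r t' hr ht'1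
  -- maximal r-separated set via Zorn
  set 𝒜 : Set (Set ℂ) :=
    {S | S ⊆ unitDisk ∧ ∀ a ∈ S, ∀ b ∈ S, a ≠ b → r ≤ hDist a b} with h𝒜_def
  obtain ⟨Z₀, hZ₀max⟩ := zorn_subset 𝒜 (by
    intro c hc hchain
    refine ⟨⋃₀ c, ⟨?_, ?_⟩, fun s hs => subset_sUnion_of_mem hs⟩
    · exact Set.sUnion_subset fun s hs => (hc hs).1
    · rintro a ⟨s, hs, has⟩ b ⟨s', hs', hbs'⟩ hab
      rcases hchain.total hs hs' with h | h
      · exact (hc hs').2 a (h has) b hbs' hab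
      · exact (hc hs).2 a has b (h hbs') hab)
  have hZ₀A : Z₀ ∈ 𝒜 := hZ₀max.prop
  have hZ₀disk : Z₀ ⊆ unitDisk := hZ₀A.1
  have hZ₀sep : ∀ a ∈ Z₀, ∀ b ∈ Z₀, a ≠ b → r ≤ hDist a b := hZ₀A.2
  -- maximality: every point of the disk is r-close to Z₀
  have hclose : ∀ x ∈ unitDisk, ∃ z ∈ Z₀, hDist z x < r := by
    intro x hx
    by_contra hcon
    push_neg at hcon
    have hxZ₀ : x ∉ Z₀ := fun hxZ => absurd (hcon x hxZ) (by rw [hDist_self]; simpa using hr)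
    have hins : insert x Z₀ ∈ 𝒜 := by
      constructor
      · exact Set.insert_subset hx hZ₀disk
      · rintro a (rfl | ha) b (rfl | hb) hab
        · exact absurd rfl hab
        · rw [hDist_symm]; exact hcon b hb
        · exact hcon a ha
        · exact hZ₀sep a ha b hb hab
    have := hZ₀max.eq_of_subset hins (Set.subset_insert x Z₀)
    exact hxZ₀ (this ▸ Set.mem_insert x Z₀)
  -- countability of Z₀
  have hZ₀count : Z₀.Countable := by
    have hcov : Z₀ ⊆ ⋃ n : ℕ, {u ∈ Z₀ | ‖u‖ ≤ 1 - 1/(n+1)} := by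
      intro u hu
      have hu1 : ‖u‖ < 1 := hZ₀disk hu
      obtain ⟨n, hn⟩ := exists_nat_one_div_lt (show (0:ℝ) < 1 - ‖u‖ by linarith)
      exact Set.mem_iUnion.mpr ⟨n, hu, by push_cast at hn ⊢; linarith⟩
    apply Set.Countable.mono hcov
    apply Set.countable_iUnion
    intro n
    obtain ⟨Mn, hMn⟩ := pack r (1 - 1/((n:ℝ)+1)) hr (by
      have : (0:ℝ) < 1/((n:ℝ)+1) := by positivity
      linarith)
    exact ((hMn {u ∈ Z₀ | ‖u‖ ≤ 1 - 1/((n:ℝ)+1)} (fun u hu => hu.2)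
      (fun a ha b hb hab => hZ₀sep a ha.1 b hb.1 hab)).1).countable
  -- the set of centers
  set Z : Set ℂ := (fun z => zeta w₀ z) '' Z₀ with hZ_def
  have hZdisk : Z ⊆ unitDisk := by
    rintro _ ⟨z, hz, rfl⟩
    exact zeta_norm_lt_one hw₀ (hZ₀disk hz)
  refine ⟨M, Z, hZ₀count.image _, hZdisk, ?_, ?_⟩
  · -- covering
    intro x hx
    have hx1 : ‖x‖ < 1 := hx
    obtain ⟨z, hzZ₀, hzx⟩ := hclose x hx
    have hz1 : ‖z‖ < 1 := hZ₀disk hzZ₀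
    set ζ : ℂ := zeta w₀ z with hζ_def
    have hζ1 : ‖ζ‖ < 1 := zeta_norm_lt_one hw₀ hz1
    have hζw₀ : eta ζ w₀ = z := eta_zeta hw₀ hz1
    set y : ℂ := eta (-ζ) x with hy_def
    have hy1 : ‖y‖ < 1 := eta_norm_lt_one (by rwa [norm_neg]) hx1
    have hζy : eta ζ y = x := eta_inv' hζ1 hx1
    have hdist : hDist w₀ y = hDist z x := by
      have := hDist_invariant hζ1 hw₀ hy1
      rw [hζw₀, hζy] at this
      exact this.symm
    have hyW : y ∈ W := by
      apply hball
      rw [Metric.mem_ball, dist_eq_norm, norm_sub_rev]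
      have hρ1 : ‖eta y w₀‖ < 1 := eta_norm_lt_one hy1 hw₀
      have hρle : ‖eta y w₀‖ ≤ hDist w₀ y := by
        rw [hDist]
        exact le_two_artanh (norm_nonneg _) hρ1
      have h2 : ‖w₀ - y‖ = ‖eta y w₀‖ * ‖1 - (starRingEnd ℂ) y * w₀‖ := by
        rw [eta, norm_div, div_mul_cancel₀]
        exact (denom_pos hw₀ hy1).ne'
      have h3 := denom_le_two hw₀ hy1
      have h4 : hDist w₀ y < r := by rw [hdist]; exact hzx
      calc ‖w₀ - y‖ = ‖eta y w₀‖ * ‖1 - (starRingEnd ℂ) y * w₀‖ := h2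
      _ ≤ ‖eta y w₀‖ * 2 := by
          apply mul_le_mul_of_nonneg_left h3 (norm_nonneg _)
      _ < ε := by
          have : ‖eta y w₀‖ < r := lt_of_le_of_lt hρle h4
          rw [hr_def] at this
          linarith
    exact ⟨ζ, ⟨z, hzZ₀, rfl⟩, y, hyW, hζy⟩
  · -- multiplicity
    intro x hx
    have hx1 : ‖x‖ < 1 := hx
    set T : Set ℂ := {z ∈ Z₀ | hDist z x < R} with hT_def
    set S : Set ℂ := {ζ ∈ Z | x ∈ eta ζ '' W} with hS_def
    have hScov : S ⊆ (fun z => zeta w₀ z) '' T := by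
      rintro ζ' ⟨⟨z, hzZ₀, rfl⟩, w, hwW, hwx⟩
      refine ⟨z, ⟨hzZ₀, ?_⟩, rfl⟩
      have hz1 : ‖z‖ < 1 := hZ₀disk hzZ₀
      have hζ1 : ‖zeta w₀ z‖ < 1 := zeta_norm_lt_one hw₀ hz1
      have hw1 : ‖w‖ < 1 := hWd w hwW
      have := hDist_invariant hζ1 hw₀ hw1
      rw [eta_zeta hw₀ hz1, hwx] at this
      rw [this]
      exact hWR w hwW
    -- transport T to the origin
    have hTdisk : ∀ z ∈ T, ‖z‖ < 1 := fun z hz => hZ₀disk hz.1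
    have hT'mem : ∀ u ∈ eta x '' T, ‖u‖ ≤ t' := by
      rintro _ ⟨z, hz, rfl⟩
      have hz1 := hTdisk z hz
      have h1 : hDist 0 (eta x z) = hDist x z := by
        have := hDist_invariant hx1 hx1 hz1
        rwa [eta_self] at this
      have h2 : hDist 0 (eta x z) = 2 * _root_.artanh ‖eta x z‖ := by
        rw [hDist, eta_zero, norm_neg]
      have h3 : hDist x z < R := by
        rw [hDist_symm]; exact hz.2
      have h4 : ‖eta x z‖ < 1 := eta_norm_lt_one hx1 hz1
      have := artanh_escape (norm_nonneg _) h4 (by rw [← h2, h1]; exact h3)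
      rw [ht'_def]
      linarith
    have hinj : Set.InjOn (eta x) T := by
      intro a ha b hb hab
      have ha1 := hTdisk a ha
      have hb1 := hTdisk b hb
      have h1 := eta_inv hx1 ha1
      have h2 := eta_inv hx1 hb1
      rw [← h1, ← h2, hab]
    have hT'sep : ∀ a ∈ eta x '' T, ∀ b ∈ eta x '' T, a ≠ b → r ≤ hDist a b := by
      rintro _ ⟨a, ha, rfl⟩ _ ⟨b, hb, rfl⟩ hab
      have hne : a ≠ b := fun h => hab (by rw [h])
      rw [hDist_invariant hx1 (hTdisk a ha) (hTdisk b hb)]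
      exact hZ₀sep a ha.1 b hb.1 hne
    obtain ⟨hT'fin, hT'card⟩ := hM (eta x '' T) hT'mem hT'sep
    have hTfin : T.Finite := Set.Finite.of_finite_image hT'fin hinj
    have hTcard : T.ncard ≤ M := by
      rw [← Set.ncard_image_of_injOn hinj]
      exact hT'card
    have hSfin : S.Finite := (hTfin.image _).subset hScov
    refine ⟨hSfin, ?_⟩
    calc S.ncard ≤ ((fun z => zeta w₀ z) '' T).ncard :=
      Set.ncard_le_ncard hScov (hTfin.image _)
    _ ≤ T.ncard := Set.ncard_image_le hTfin
    _ ≤ M := hTcard
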